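/- The closure, inside the subspace ℂ² ∖ {0}, of the set {v ∈ ℂ² ∖ {0} : τ(v) > 0} equals {v ∈ ℂ² ∖ {0} : τ(v) ≥ 0}. Likewise the closure of {v : τ(v) < 0} equals {v : τ(v) ≤ 0}. -/
import Mathlib

noncomputable def tau (v : Fin 2 → ℂ) : ℝ := (v 0 * (starRingEnd ℂ) (v 1)).im

open Complex Filter Topology

lemma tau_cont : Continuous tau := by
  unfold tau
  fun_prop

lemma tau_pair (a b : ℂ) : tau ![a, b] = (a * (starRingEnd ℂ) b).im := by
  simp [tau]

lemma aux (σ : ℝ) (hσ : σ ≠ 0) (v : Fin 2 → ℂ) (hv : v ≠ 0) (h : 0 ≤ σ * tau v) :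
    (⟨v, hv⟩ : {v : Fin 2 → ℂ // v ≠ 0}) ∈
      closure ((Subtype.val ⁻¹' {x : Fin 2 → ℂ | 0 < σ * tau x}) :
        Set {v : Fin 2 → ℂ // v ≠ 0}) := by
  have hvv : v = ![v 0, v 1] := by funext i; fin_cases i <;> rfl
  have hcases : v 0 ≠ 0 ∨ v 1 ≠ 0 := by
    by_contra hc
    push_neg at hc
    exact hv (by funext i; fin_cases i <;> simp [hc.1, hc.2])
  rcases hcases with hv0 | hv1
  · -- perturb second coordinate
    set w : ℝ → Fin 2 → ℂ := fun ε => ![v 0, v 1 - (σ:ℂ) * ε * I * v 0] with hw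
    have hne : ∀ ε, w ε ≠ 0 := by
      intro ε hz
      exact hv0 (by simpa [hw] using congrFun hz 0)
    have htau : ∀ ε : ℝ, tau (w ε) = tau v + σ * ε * Complex.normSq (v 0) := by
      intro ε
      simp only [hw, tau_pair, map_sub, mul_sub, Complex.sub_im]
      have : v 0 * (starRingEnd ℂ) ((σ:ℂ) * ε * I * v 0)
          = -((σ:ℂ) * ε * I * Complex.normSq (v 0)) := by
        simp only [map_mul, Complex.conj_I, Complex.conj_ofReal]
        rw [show v 0 * ((σ:ℂ) * ↑ε * -I * (starRingEnd ℂ) (v 0))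
            = -((σ:ℂ) * ↑ε * I * (v 0 * (starRingEnd ℂ) (v 0))) from by ring,
          Complex.mul_conj]
      rw [this]
      simp [tau, Complex.mul_im]
    have htend : Tendsto (fun ε : ℝ => w ε) (𝓝[>] (0:ℝ)) (𝓝 v) := by
      rw [hvv]
      refine Tendsto.mono_left ?_ nhdsWithin_le_nhds
      rw [tendsto_pi_nhds]
      intro i
      fin_cases i
      · simp only [hw]; simp
      · simp only [hw]
        have : Continuous fun ε : ℝ => v 1 - (σ:ℂ) * ε * I * v 0 := by fun_prop
        have := this.tendsto 0
        simpa using this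
    have hmem : ∀ᶠ ε in 𝓝[>] (0:ℝ),
        (⟨w ε, hne ε⟩ : {v : Fin 2 → ℂ // v ≠ 0}) ∈
          (Subtype.val ⁻¹' {x : Fin 2 → ℂ | 0 < σ * tau x}) := by
      filter_upwards [self_mem_nhdsWithin] with ε (hε : 0 < ε)
      simp only [Set.mem_preimage, Set.mem_setOf_eq, htau]
      have hns : 0 < Complex.normSq (v 0) := Complex.normSq_pos.2 hv0
      nlinarith [sq_nonneg σ, mul_pos (mul_pos (mul_pos hε hns) (mul_self_pos.2 hσ)) hns]
    exact mem_closure_of_tendsto (tendsto_subtype_rng.2 htend) hmem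
  · -- perturb first coordinate
    set w : ℝ → Fin 2 → ℂ := fun ε => ![v 0 + (σ:ℂ) * ε * I * v 1, v 1] with hw
    have hne : ∀ ε, w ε ≠ 0 := by
      intro ε hz
      exact hv1 (by simpa [hw] using congrFun hz 1)
    have htau : ∀ ε : ℝ, tau (w ε) = tau v + σ * ε * Complex.normSq (v 1) := by
      intro ε
      simp only [hw, tau_pair, add_mul, Complex.add_im]
      have : ((σ:ℂ) * ε * I * v 1) * (starRingEnd ℂ) (v 1)
          = (σ:ℂ) * ε * I * Complex.normSq (v 1) := by
        rw [mul_assoc, Complex.mul_conj]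
      rw [this]
      simp [tau, Complex.mul_im]
    have htend : Tendsto (fun ε : ℝ => w ε) (𝓝[>] (0:ℝ)) (𝓝 v) := by
      rw [hvv]
      refine Tendsto.mono_left ?_ nhdsWithin_le_nhds
      rw [tendsto_pi_nhds]
      intro i
      fin_cases i
      · simp only [hw]
        have : Continuous fun ε : ℝ => v 0 + (σ:ℂ) * ε * I * v 1 := by fun_prop
        have := this.tendsto 0
        simpa using this
      · simp only [hw]; simp
    have hmem : ∀ᶠ ε in 𝓝[>] (0:ℝ),
        (⟨w ε, hne ε⟩ : {v : Fin 2 → ℂ // v ≠ 0}) ∈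
          (Subtype.val ⁻¹' {x : Fin 2 → ℂ | 0 < σ * tau x}) := by
      filter_upwards [self_mem_nhdsWithin] with ε (hε : 0 < ε)
      simp only [Set.mem_preimage, Set.mem_setOf_eq, htau]
      have hns : 0 < Complex.normSq (v 1) := Complex.normSq_pos.2 hv1
      nlinarith [mul_pos (mul_pos (mul_pos hε hns) (mul_self_pos.2 hσ)) hns]
    exact mem_closure_of_tendsto (tendsto_subtype_rng.2 htend) hmem

theorem closure_tau_halves :
    closure ((Subtype.val ⁻¹' {v : Fin 2 → ℂ | 0 < tau v}) :
        Set {v : Fin 2 → ℂ // v ≠ 0})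
      = Subtype.val ⁻¹' {v : Fin 2 → ℂ | 0 ≤ tau v} ∧
    closure ((Subtype.val ⁻¹' {v : Fin 2 → ℂ | tau v < 0}) :
        Set {v : Fin 2 → ℂ // v ≠ 0})
      = Subtype.val ⁻¹' {v : Fin 2 → ℂ | tau v ≤ 0} := by
  have hc : Continuous fun x : {v : Fin 2 → ℂ // v ≠ 0} => tau x.val :=
    tau_cont.comp continuous_subtype_val
  constructor
  · apply Set.Subset.antisymm
    · exact closure_minimal (Set.preimage_mono fun v hv => le_of_lt (Set.mem_setOf_eq ▸ hv))
        (isClosed_le continuous_const hc)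
    · rintro ⟨v, hv⟩ hle
      have := aux 1 one_ne_zero v hv (by simpa using hle)
      simpa using this
  · apply Set.Subset.antisymm
    · exact closure_minimal (Set.preimage_mono fun v hv => le_of_lt (Set.mem_setOf_eq ▸ hv))
        (isClosed_le hc continuous_const)
    · rintro ⟨v, hv⟩ hle
      have := aux (-1) (by norm_num) v hv
        (by simp only [neg_one_mul, Left.nonneg_neg_iff]; exact hle)
      simpa [neg_pos] using this
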